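/- Let x > 0, p > 0, and C ≥ 0 be real numbers, and let y : ℝ → ℝ be a measurable function satisfying 0 ≤ y(t) ≤ p for all t, y(t) = 0 for t ∉ [0, C], and ∫ y(t) dt = x. Then ∫ (t/x)·y(t) dt + x/(2p) ≤ C. -/

import Mathlib

open MeasureTheory

/-- Why the LP relaxation of Appendix A lower-bounds response time: if a job of size `x`
is processed at measurable rate `y t ∈ [0, p]`, with `y` supported in `[0, C]` and total
work `∫ y = x`, then its LP objective contribution `∫ (t/x)·y t dt + x/(2p)` is at most
its completion time `C`. -/
theorem lp_contribution_le_completion_time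
    (x p C : ℝ) (hx : 0 < x) (hp : 0 < p) (hC : 0 ≤ C)
    (y : ℝ → ℝ) (hmeas : Measurable y)
    (hnn : ∀ t, 0 ≤ y t) (hub : ∀ t, y t ≤ p)
    (hsupp : ∀ t, t ∉ Set.Icc (0 : ℝ) C → y t = 0)
    (hwork : ∫ t, y t = x) :
    (∫ t, (t / x) * y t) + x / (2 * p) ≤ C := by
  set s : ℝ := C - x / p with hs
  have hmI : MeasurableSet (Set.Icc (0:ℝ) C) := measurableSet_Icc
  have hvol : volume (Set.Icc (0:ℝ) C) ≠ ⊤ := by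
    simp [Real.volume_Icc]
  -- y is integrable
  have hyeq : y = (Set.Icc (0:ℝ) C).indicator y := by
    ext t
    by_cases ht : t ∈ Set.Icc (0:ℝ) C
    · simp [Set.indicator_of_mem ht]
    · simp [Set.indicator_of_notMem ht, hsupp t ht]
  have hIy : Integrable y := by
    rw [hyeq]
    apply (IntegrableOn.integrable_indicator · hmI)
    apply Measure.integrableOn_of_bounded hvol hmeas.aestronglyMeasurable (M := p)
    filter_upwards with t
    rw [Real.norm_eq_abs, abs_of_nonneg (hnn t)]; exact hub t
  -- t * y t is integrable
  have htyeq : (fun t => t * y t) = (Set.Icc (0:ℝ) C).indicator (fun t => t * y t) := by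
    ext t
    by_cases ht : t ∈ Set.Icc (0:ℝ) C
    · simp [Set.indicator_of_mem ht]
    · simp [Set.indicator_of_notMem ht, hsupp t ht]
  have hIty : Integrable (fun t => t * y t) := by
    rw [htyeq]
    apply (IntegrableOn.integrable_indicator · hmI)
    apply Measure.integrableOn_of_bounded hvol
      ((measurable_id.mul hmeas).aestronglyMeasurable) (M := C * p)
    filter_upwards [ae_restrict_mem hmI] with t ht
    simp only [id_eq, Real.norm_eq_abs, Pi.mul_apply]
    rw [abs_of_nonneg (mul_nonneg ht.1 (hnn t))]
    exact mul_le_mul ht.2 (hub t) (hnn t) hC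
  -- x ≤ p * C, so 0 ≤ s
  have hxpc : x ≤ p * C := by
    have h1 : ∫ t, y t ≤ ∫ t, (Set.Icc (0:ℝ) C).indicator (fun _ => p) t := by
      apply integral_mono hIy
      · exact (integrable_indicator_iff hmI).2 (integrableOn_const hvol)
      · intro t
        by_cases ht : t ∈ Set.Icc (0:ℝ) C
        · simpa [Set.indicator_of_mem ht] using hub t
        · simp [Set.indicator_of_notMem ht, hsupp t ht]
    rw [hwork, integral_indicator hmI] at h1
    simpa [Real.volume_Icc, ENNReal.toReal_ofReal hC, mul_comm, max_eq_left hC] using h1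
  have hs0 : 0 ≤ s := by
    rw [hs, sub_nonneg, div_le_iff₀ hp]
    linarith [hxpc]
  have hsC : s ≤ C := by
    rw [hs]
    have : 0 < x / p := div_pos hx hp
    linarith
  have hmJ : MeasurableSet (Set.Icc s C) := measurableSet_Icc
  have hvolJ : volume (Set.Icc s C) ≠ ⊤ := by simp [Real.volume_Icc]
  set ys : ℝ → ℝ := (Set.Icc s C).indicator (fun _ => p) with hysdef
  have hIys : Integrable ys :=
    (integrable_indicator_iff hmJ).2 (integrableOn_const hvolJ)
  have hItys : Integrable (fun t => t * ys t) := by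
    have : (fun t => t * ys t) = (Set.Icc s C).indicator (fun t => t * p) := by
      ext t
      by_cases ht : t ∈ Set.Icc s C
      · simp [hysdef, Set.indicator_of_mem ht]
      · simp [hysdef, Set.indicator_of_notMem ht]
    rw [this]
    exact (integrable_indicator_iff hmJ).2
      ((intervalIntegrable_iff_integrableOn_Icc_of_le hsC).1
        ((continuous_id.mul continuous_const).intervalIntegrable s C))
  -- ∫ ys = x
  have hintys : ∫ t, ys t = x := by
    rw [hysdef, integral_indicator hmJ]
    simp [Real.volume_Icc, ENNReal.toReal_ofReal (sub_nonneg.2 hsC), hs]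
    rw [max_eq_left (div_pos hx hp).le]
    field_simp
  -- ∫ t * ys t = p * (C^2 - s^2) / 2
  have hinttys : ∫ t, t * ys t = p * (C^2 - s^2) / 2 := by
    have heq : (fun t => t * ys t) = (Set.Icc s C).indicator (fun t => t * p) := by
      ext t
      by_cases ht : t ∈ Set.Icc s C
      · simp [hysdef, Set.indicator_of_mem ht]
      · simp [hysdef, Set.indicator_of_notMem ht]
    rw [heq, integral_indicator hmJ, integral_Icc_eq_integral_Ioc,
      ← intervalIntegral.integral_of_le hsC]
    rw [intervalIntegral.integral_mul_const, integral_id]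
    ring
  -- pointwise nonnegativity
  have hptwise : ∀ t, 0 ≤ (s - t) * (y t - ys t) := by
    intro t
    by_cases ht : t ∈ Set.Icc s C
    · have : ys t = p := Set.indicator_of_mem ht (fun _ => p)
      rw [this]
      nlinarith [hub t, ht.1]
    · have hys0 : ys t = 0 := Set.indicator_of_notMem ht (fun _ => p)
      rw [hys0, sub_zero]
      rcases lt_or_ge t s with h | h
      · exact mul_nonneg (by linarith) (hnn t)
      · have hCt : C < t := by
          by_contra hc
          exact ht ⟨h, le_of_not_gt hc⟩
        have : y t = 0 := hsupp t (by simp [Set.mem_Icc]; intro; linarith)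
        simp [this]
  -- the bathtub inequality
  have hkey : ∫ t, t * y t ≤ ∫ t, t * ys t := by
    have h0 : 0 ≤ ∫ t, (s - t) * (y t - ys t) := integral_nonneg hptwise
    have hexp : ∫ t, (s - t) * (y t - ys t)
        = s * (∫ t, y t) - (∫ t, t * y t) - s * (∫ t, ys t) + (∫ t, t * ys t) := by
      have : (fun t => (s - t) * (y t - ys t))
          = fun t => (s * y t - t * y t) + (t * ys t - s * ys t) := by
        ext t; ring
      rw [this]
      have hA : Integrable (fun t => s * y t - t * y t) := (hIy.const_mul s).sub hIty
      have hB : Integrable (fun t => t * ys t - s * ys t) := hItys.sub (hIys.const_mul s)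
      have hA1 : Integrable (fun t => s * y t) := hIy.const_mul s
      have hB1 : Integrable (fun t => s * ys t) := hIys.const_mul s
      rw [integral_add hA hB, integral_sub hA1 hIty, integral_sub hItys hB1,
        integral_const_mul, integral_const_mul]
      ring
    rw [hexp, hwork, hintys] at h0
    linarith
  -- finish
  have hfin : ∫ t, (t / x) * y t = (∫ t, t * y t) / x := by
    rw [← integral_div]
    congr 1; ext t; ring
  rw [hfin]
  rw [hinttys] at hkey
  have h2 : (∫ t, t * y t) / x ≤ p * (C^2 - s^2) / 2 / x :=
    div_le_div_of_nonneg_right hkey hx.le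
  have hfinal : p * (C^2 - s^2) / 2 / x + x / (2 * p) = C := by
    rw [hs]
    field_simp
    ring
  linarith
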